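/- Let P ⊆ ℝ² and let W̄ = {w_1, …, w_k} ⊆ P be k distinct witnesses such that no point of P sees more than two of them (|V(p) ∩ W̄| ≤ 2 for every p ∈ P). Then every finite set C ⊆ P of guards covering W̄ (i.e., W̄ ⊆ V(C)) satisfies |C ∩ V(W̄)| ≥ ⌈k/2⌉; in particular the inequality ∑_{g ∈ V(W̄) ∩ G'} x_g ≥ ⌈k/2⌉ is valid for every binary feasible solution of AGP(G', P) for any finite guard set G' ⊆ P. -/
import Mathlib


/-- Points of the Euclidean plane. -/
abbrev Pt := EuclideanSpace ℝ (Fin 2)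

/-- Visibility region of `p` in `P`. -/
def Vis (P : Set Pt) (p : Pt) : Set Pt := {q ∈ P | segment ℝ p q ⊆ P}

/-- Let `W̄ = {w 0, …, w (k-1)} ⊆ P` be `k` distinct witnesses such
that no point of `P` sees more than two of them.  Then every finite guard set `C ⊆ P`
covering `W̄` satisfies `|C ∩ V(W̄)| ≥ ⌈k/2⌉`. -/
theorem ec_valid (P : Set Pt) (k : ℕ) (w : Fin k → Pt)
    (hwinj : Function.Injective w) (hwP : Set.range w ⊆ P)
    (hsee : ∀ p ∈ P, (Vis P p ∩ Set.range w).ncard ≤ 2)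
    (C : Finset Pt) (hCP : ↑C ⊆ P)
    (hcover : Set.range w ⊆ ⋃ c ∈ C, Vis P c) :
    (k + 1) / 2 ≤ ((↑C : Set Pt) ∩ ⋃ i, Vis P (w i)).ncard := by
  classical
  have hc : ∀ i : Fin k, ∃ g ∈ C, w i ∈ Vis P g := by
    intro i
    have := hcover ⟨i, rfl⟩
    simpa using this
  choose c hcC hcv using hc
  set S := (↑C : Set Pt) ∩ ⋃ j, Vis P (w j) with hS
  have hcS : ∀ i, c i ∈ S := by
    intro i
    refine ⟨hcC i, Set.mem_iUnion.2 ⟨i, ?_⟩⟩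
    refine ⟨hCP (hcC i), ?_⟩
    rw [segment_symm]
    exact (hcv i).2
  have hSfin : S.Finite := (C.finite_toSet).inter_of_left _
  set T := Finset.image c Finset.univ with hT'
  have hk : k ≤ 2 * T.card := by
    have := Finset.card_le_mul_card_image (s := Finset.univ) (f := c) (n := 2) ?_
    · simpa using this
    · intro g hg
      set F := Finset.univ.filter fun i => c i = g with hF
      obtain ⟨i0, -, hi0⟩ := Finset.mem_image.1 hg
      have hgP : g ∈ P := hi0 ▸ hCP (hcC i0)
      have hsub : ↑(F.image w) ⊆ Vis P g ∩ Set.range w := by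
        intro x hx
        simp only [hF, Finset.coe_image, Set.mem_image, Finset.mem_coe,
          Finset.mem_filter, Finset.mem_univ, true_and] at hx
        obtain ⟨i, hi, rfl⟩ := hx
        exact ⟨hi ▸ (hcv i), ⟨i, rfl⟩⟩
      have hfin : (Vis P g ∩ Set.range w).Finite :=
        (Set.finite_range w).inter_of_right _
      calc F.card = (F.image w).card :=
            (Finset.card_image_of_injective _ hwinj).symm
        _ = (↑(F.image w) : Set Pt).ncard := (Set.ncard_coe_finset _).symm
        _ ≤ (Vis P g ∩ Set.range w).ncard := Set.ncard_le_ncard hsub hfin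
        _ ≤ 2 := hsee g hgP
  have hTS : T.card ≤ S.ncard := by
    have hsub : (↑T : Set Pt) ⊆ S := by
      intro x hx
      simp only [hT', Finset.coe_image, Set.mem_image, Finset.mem_coe,
        Finset.mem_univ, true_and, Finset.coe_univ, Set.image_univ,
        Set.mem_range] at hx
      obtain ⟨i, rfl⟩ := hx
      exact hcS i
    calc T.card = (↑T : Set Pt).ncard := (Set.ncard_coe_finset _).symm
      _ ≤ S.ncard := Set.ncard_le_ncard hsub hSfin
  omega
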